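/- arXiv:2411.16260 — 2 statements merged into one kernel-verified Lean document; each statement's English description precedes it below -/
import Mathlib

section
/- Theorem 1 (Commutativity — invariance to input permutations): under the weight assignment W_q = W_k = 0, b_q = b_k = (fun _ => 1), W_v = 1 (the identity matrix), b_v = 0, with 0 < D and 0 < L, for every operand sequence z : Fin M → Fin n, every permutation σ : Equiv.Perm (Fin M), and every position t : Fin L, the attention outputs of the embedded sequences coincide: s t (e_{z ∘ σ}) = s t (e_z). In other words, the hidden state produced by this attention layer is invariant to permutations of the input operand tokens. -/
open Matrix

/-- The output of a single attention layer at position `t`, given weight matrices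
`Wq Wk Wv`, bias vectors `bq bk bv`, and an embedding sequence `e`. -/
noncomputable def attnOut (D L : ℕ)
    (Wq Wk Wv : Matrix (Fin D) (Fin D) ℝ) (bq bk bv : Fin D → ℝ)
    (e : Fin L → (Fin D → ℝ)) (t : Fin L) : Fin D → ℝ :=
  let q : Fin L → (Fin D → ℝ) := fun i => Wq.mulVec (e i) + bq
  let k : Fin L → (Fin D → ℝ) := fun i => Wk.mulVec (e i) + bk
  let v : Fin L → (Fin D → ℝ) := fun i => Wv.mulVec (e i) + bv
  ∑ i : Fin L, ((q t ⬝ᵥ k i) / (∑ j : Fin L, q t ⬝ᵥ k j)) • v i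

theorem stmt3 (D L n M : ℕ) (hD : 0 < D) (hL : 0 < L)
    (ι : Fin M → Fin L) (hι : Function.Injective ι)
    (b : Fin L → (Fin D → ℝ)) (W : Fin n → (Fin D → ℝ))
    (eEmb : (Fin M → Fin n) → Fin L → (Fin D → ℝ))
    (hEmb₁ : ∀ z : Fin M → Fin n, ∀ m : Fin M, eEmb z (ι m) = b (ι m) + W (z m))
    (hEmb₂ : ∀ z : Fin M → Fin n, ∀ i : Fin L, i ∉ Set.range ι → eEmb z i = b i)
    (z : Fin M → Fin n) (σ : Equiv.Perm (Fin M)) (t : Fin L) :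
    attnOut D L 0 0 1 (fun _ => 1) (fun _ => 1) 0 (eEmb (z ∘ σ)) t
      = attnOut D L 0 0 1 (fun _ => 1) (fun _ => 1) 0 (eEmb z) t := by
  have key : ∀ w : Fin M → Fin n,
      ∑ i : Fin L, eEmb w i = (∑ i : Fin L, b i) + ∑ m : Fin M, W (w m) := by
    intro w
    have h1 : ∑ i : Fin L, (eEmb w i - b i)
        = ∑ i ∈ Finset.univ.image ι, (eEmb w i - b i) := by
      symm
      apply Finset.sum_subset (Finset.subset_univ _)
      intro i _ hi
      have : i ∉ Set.range ι := by
        intro ⟨m, hm⟩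
        exact hi (Finset.mem_image.2 ⟨m, Finset.mem_univ m, hm⟩)
      rw [hEmb₂ w i this]; simp
    have h2 : ∑ i ∈ Finset.univ.image ι, (eEmb w i - b i)
        = ∑ m : Fin M, W (w m) := by
      rw [Finset.sum_image (fun a _ c _ h => hι h)]
      refine Finset.sum_congr rfl fun m _ => ?_
      rw [hEmb₁ w m]; abel
    calc ∑ i : Fin L, eEmb w i = ∑ i : Fin L, (b i + (eEmb w i - b i)) := by
          refine Finset.sum_congr rfl fun i _ => by abel
      _ = (∑ i : Fin L, b i) + ∑ i : Fin L, (eEmb w i - b i) := Finset.sum_add_distrib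
      _ = (∑ i : Fin L, b i) + ∑ m : Fin M, W (w m) := by rw [h1, h2]
  have hsum : ∑ i : Fin L, eEmb (z ∘ σ) i = ∑ i : Fin L, eEmb z i := by
    rw [key, key]
    congr 1
    exact Equiv.sum_comp σ (fun m => W (z m))
  simp only [attnOut, Matrix.zero_mulVec, Matrix.one_mulVec, zero_add, add_zero]
  rw [← Finset.smul_sum, ← Finset.smul_sum, hsum]
end

section
/- No permutation-invariant (multiset-valued) function computes the chained ⊖ operator: for all n M : ℕ with 3 ≤ n and 2 ≤ M, there is no function g : Multiset (Fin n) → ℕ such that for every list l : List (Fin n) with l.length = M, g (↑l) = ominusChain (l.map Fin.val). Hence a model whose hidden state depends only on the multiset of input tokens cannot produce correct outputs for the operator ⊖. -/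
/-- The number of unit steps taken when traveling from `i` to `j` by unit
increments modulo `n` (a full loop of `n` steps when `i = j`). -/
def steps (n i j : ℕ) : ℕ := if i < j then j - i else n + j - i

/-- The number of times the element `0` is encountered while traveling from
`i` to `j` by unit increments modulo `n`. -/
def ominus (n i j : ℕ) : ℕ :=
  ((Finset.Icc 1 (steps n i j)).filter (fun t => (i + t) % n = 0)).card

/-- The chained `⊖` value on a list of operands:
`z_{i₁} ⊖ z_{i₂} ⊖ ⋯ ⊖ z_{i_M}` is the sum of `ominus` over consecutive pairs. -/
def ominusChain (n : ℕ) : List ℕ → ℕ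
  | [] => 0
  | [_] => 0
  | a :: b :: t => ominus n a b + ominusChain n (b :: t)

lemma om12 (n : ℕ) (hn : 3 ≤ n) : ominus n 1 2 = 0 := by
  unfold ominus steps
  rw [if_pos (by norm_num)]
  rw [Finset.card_eq_zero, Finset.filter_eq_empty_iff]
  intro t ht
  simp only [Finset.mem_Icc] at ht
  have : t = 1 := by omega
  subst this
  have : (1 + 1) % n = 2 := Nat.mod_eq_of_lt (by omega)
  omega

lemma om_gen (n i : ℕ) (hn : 3 ≤ n) (hi : 1 ≤ i) (hi2 : i ≤ 2) (s : ℕ)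
    (hs1 : n - i ≤ s) (hs2 : s ≤ n) :
    ((Finset.Icc 1 s).filter (fun t => (i + t) % n = 0)).card = 1 := by
  have : (Finset.Icc 1 s).filter (fun t => (i + t) % n = 0) = {n - i} := by
    ext t
    simp only [Finset.mem_filter, Finset.mem_Icc, Finset.mem_singleton]
    constructor
    · rintro ⟨⟨h1, h2⟩, h3⟩
      have hd : n ∣ i + t := Nat.dvd_of_mod_eq_zero h3
      obtain ⟨c, hc⟩ := hd
      have hc2 : c < 2 := by
        by_contra hcc
        push_neg at hcc
        have : n * 2 ≤ n * c := Nat.mul_le_mul_left n hcc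
        omega
      interval_cases c <;> omega
    · rintro rfl
      refine ⟨⟨by omega, by omega⟩, ?_⟩
      have : i + (n - i) = n := by omega
      rw [this, Nat.mod_self]
  rw [this, Finset.card_singleton]

lemma om22 (n : ℕ) (hn : 3 ≤ n) : ominus n 2 2 = 1 := by
  unfold ominus steps
  rw [if_neg (by omega)]
  exact om_gen n 2 hn (by omega) le_rfl _ (by omega) (by omega)

lemma om21 (n : ℕ) (hn : 3 ≤ n) : ominus n 2 1 = 1 := by
  unfold ominus steps
  rw [if_neg (by omega)]
  exact om_gen n 2 hn (by omega) le_rfl _ (by omega) (by omega)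

lemma chain_rep (n : ℕ) (hn : 3 ≤ n) : ∀ k, ominusChain n (List.replicate (k+1) 2) = k := by
  intro k
  induction k with
  | zero => simp [ominusChain]
  | succ k ih =>
    have : List.replicate (k+2) 2 = 2 :: 2 :: List.replicate k 2 := by
      simp [List.replicate_succ]
    rw [this]
    have h2 : List.replicate (k+1) 2 = 2 :: List.replicate k 2 := by
      simp [List.replicate_succ]
    rw [h2] at ih
    rw [ominusChain, ih, om22 n hn]
    omega

lemma chain_rep1 (n : ℕ) (hn : 3 ≤ n) :
    ∀ k, ominusChain n (List.replicate (k+1) 2 ++ [1]) = k + 1 := by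
  intro k
  induction k with
  | zero => simp [ominusChain, om21 n hn]
  | succ k ih =>
    have key : List.replicate (k+1+1) 2 ++ [1] = 2 :: (2 :: (List.replicate k 2 ++ [1])) := by
      simp [List.replicate_succ]
    have h2 : List.replicate (k+1) 2 ++ [1] = 2 :: (List.replicate k 2 ++ [1]) := by
      simp [List.replicate_succ]
    rw [h2] at ih
    rw [key, ominusChain, om22 n hn, ih]
    omega

theorem stmt12 (n M : ℕ) (hn : 3 ≤ n) (hM : 2 ≤ M) :
    ¬ ∃ g : Multiset (Fin n) → ℕ,
      ∀ l : List (Fin n), l.length = M →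
        g (↑l) = ominusChain n (l.map Fin.val) := by
  rintro ⟨g, hg⟩
  set a : Fin n := ⟨1, by omega⟩
  set b : Fin n := ⟨2, by omega⟩
  set l1 : List (Fin n) := a :: List.replicate (M-1) b
  set l2 : List (Fin n) := List.replicate (M-1) b ++ [a]
  have hlen1 : l1.length = M := by simp [l1]; omega
  have hlen2 : l2.length = M := by simp [l2]; omega
  have hmult : (↑l1 : Multiset (Fin n)) = ↑l2 :=
    Quotient.sound (List.perm_append_singleton a (List.replicate (M-1) b)).symm
  have e1 := hg l1 hlen1
  have e2 := hg l2 hlen2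
  rw [hmult] at e1
  have hm1 : l1.map Fin.val = 1 :: List.replicate (M-1) 2 := by
    simp [l1, a, b]
  have hm2 : l2.map Fin.val = List.replicate (M-1) 2 ++ [1] := by
    simp [l2, a, b]
  rw [hm1] at e1
  rw [hm2] at e2
  have hM1 : M - 1 = (M - 2) + 1 := by omega
  rw [hM1] at e1 e2
  have c1 : ominusChain n (1 :: List.replicate (M-2+1) 2) = M - 2 := by
    rw [List.replicate_succ, ominusChain, om12 n hn, ← List.replicate_succ,
      chain_rep n hn]
    omega
  rw [c1] at e1
  rw [chain_rep1 n hn] at e2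
  omega
end
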